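/- arXiv:2112.00072 — 2 statements merged into one kernel-verified Lean document; each statement's English description precedes it below -/
import Mathlib

section
/- Let P be a Borel probability measure on Ω = C([0,∞), J) with the local uniform topology, let x₀ be in the interior of J, and for b > x₀ let τ⁺_b(ω) = inf{s : ω(s) ≥ b} and σ⁺_b(ω) = inf{s : ω(s) > b}. Then the set {b ∈ (x₀, sup J) : P(τ⁺_b ≠ σ⁺_b) > 0} is at most countable. -/
open Filter Topology NNReal ENNReal MeasureTheory

noncomputable instance (J : Set ℝ) :
    MeasurableSpace {ω : C(ℝ≥0, ℝ) // ∀ t, ω t ∈ J} := borel _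

instance (J : Set ℝ) : BorelSpace {ω : C(ℝ≥0, ℝ) // ∀ t, ω t ∈ J} := ⟨rfl⟩

namespace Stmt4Aux

variable {J : Set ℝ}

/-- The level-`b` max set on `[0, q]`. -/
def M (q : ℚ) (b : ℝ) : Set {ω : C(ℝ≥0, ℝ) // ∀ t, ω t ∈ J} :=
  {ω | (∀ s ≤ Real.toNNReal q, ω.1 s ≤ b) ∧ ∃ s ≤ Real.toNNReal q, ω.1 s = b}

lemma measurableSet_M (q : ℚ) (b : ℝ) : MeasurableSet (M (J := J) q b) := by
  have hK : IsCompact (Set.Iic (Real.toNNReal q)) := by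
    rw [← Set.Icc_bot]; exact isCompact_Icc
  have hopen : ∀ c : ℝ, IsOpen {ω : {ω : C(ℝ≥0, ℝ) // ∀ t, ω t ∈ J} |
      Set.MapsTo ω.1 (Set.Iic (Real.toNNReal q)) (Set.Iio c)} := by
    intro c
    exact (ContinuousMap.isOpen_setOf_mapsTo hK isOpen_Iio).preimage continuous_subtype_val
  have : M (J := J) q b = (⋂ n : ℕ, {ω : {ω : C(ℝ≥0, ℝ) // ∀ t, ω t ∈ J} |
      Set.MapsTo ω.1 (Set.Iic (Real.toNNReal q)) (Set.Iio (b + 1 / (n + 1)))}) \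
      {ω | Set.MapsTo ω.1 (Set.Iic (Real.toNNReal q)) (Set.Iio b)} := by
    ext ω
    simp only [M, Set.mem_setOf_eq, Set.mem_diff, Set.mem_iInter, Set.MapsTo,
      Set.mem_Iic, Set.mem_Iio]
    constructor
    · rintro ⟨h1, s, hs, hsb⟩
      refine ⟨fun n t ht => lt_of_le_of_lt (h1 t ht) (lt_add_of_pos_right b (by positivity)), ?_⟩
      intro hcon
      exact absurd (hcon hs) (by rw [hsb]; exact lt_irrefl b)
    · rintro ⟨h1, h2⟩
      have hle : ∀ s, s ≤ Real.toNNReal q → ω.1 s ≤ b := by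
        intro s hs
        by_contra hcon
        push_neg at hcon
        obtain ⟨n, hn⟩ := exists_nat_one_div_lt (sub_pos.2 hcon)
        have := h1 n hs
        linarith
      push_neg at h2
      obtain ⟨s, hs, hsb⟩ := h2
      exact ⟨hle, s, hs, le_antisymm (hle s hs) hsb⟩
  rw [this]
  exact MeasurableSet.diff (MeasurableSet.iInter fun n => (hopen _).measurableSet)
    (hopen b).measurableSet

lemma disjoint_M (q : ℚ) : Pairwise (Function.onFun Disjoint (fun b : ℝ => M (J := J) q b)) := by
  intro b b' hbb'
  simp only [Function.onFun, Set.disjoint_left]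
  rintro ω ⟨h1, s, hs, hsb⟩ ⟨h1', s', hs', hsb'⟩
  exact hbb' (le_antisymm (hsb ▸ h1' s hs) (hsb' ▸ h1 s' hs'))

/-- Key pointwise lemma: if the two hitting times differ, `ω` attains max `b` on some
rational interval `[0, q]`. -/
lemma exists_mem_M {b : ℝ} {ω : {ω : C(ℝ≥0, ℝ) // ∀ t, ω t ∈ J}}
    (h : (⨅ s ∈ {s : ℝ≥0 | b ≤ ω.1 s}, (s : ℝ≥0∞)) ≠
      ⨅ s ∈ {s : ℝ≥0 | b < ω.1 s}, (s : ℝ≥0∞)) :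
    ∃ q : ℚ, ω ∈ M (J := J) q b := by
  set τ := ⨅ s ∈ {s : ℝ≥0 | b ≤ ω.1 s}, (s : ℝ≥0∞) with hτ
  set σ := ⨅ s ∈ {s : ℝ≥0 | b < ω.1 s}, (s : ℝ≥0∞) with hσ
  have hτσ : τ ≤ σ := by
    exact biInf_mono fun s (hs : b < ω.1 s) => (le_of_lt hs : b ≤ ω.1 s)
  have hlt : τ < σ := lt_of_le_of_ne hτσ h
  -- T is nonempty and closed
  set T : Set ℝ≥0 := {s | b ≤ ω.1 s} with hT
  have hTne : T.Nonempty := by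
    by_contra hcon
    rw [Set.not_nonempty_iff_eq_empty] at hcon
    rw [hτ, hcon] at hlt
    simp at hlt
  have hTclosed : IsClosed T := isClosed_Ici.preimage ω.1.continuous
  set t0 := sInf T with ht0
  have ht0T : t0 ∈ T := hTclosed.csInf_mem hTne (OrderBot.bddBelow T)
  have hτt0 : τ = (t0 : ℝ≥0∞) := by
    apply le_antisymm
    · exact biInf_le _ ht0T
    · exact le_iInf₂ fun s hs => ENNReal.coe_le_coe.2 (csInf_le (OrderBot.bddBelow T) hs)
  -- ω t0 = b
  have hωt0 : ω.1 t0 = b := by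
    refine le_antisymm ?_ ht0T
    by_contra hcon
    push_neg at hcon
    have : σ ≤ (t0 : ℝ≥0∞) := biInf_le _ hcon
    rw [← hτt0] at this
    exact absurd hlt (not_lt.2 this)
  -- ω s ≤ b for s with (s : ℝ≥0∞) < σ
  have hle : ∀ s : ℝ≥0, (s : ℝ≥0∞) < σ → ω.1 s ≤ b := by
    intro s hs
    by_contra hcon
    push_neg at hcon
    exact absurd hs (not_lt.2 (biInf_le _ hcon))
  -- pick r between τ and σ
  obtain ⟨r, hr1, hr2⟩ := exists_between hlt
  have hrtop : r ≠ ⊤ := (lt_of_lt_of_le hr2 le_top).ne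
  lift r to ℝ≥0 using hrtop
  rw [hτt0] at hr1
  have ht0r : t0 < r := ENNReal.coe_lt_coe.1 hr1
  obtain ⟨q, hq1, hq2⟩ := exists_rat_btwn (show (t0 : ℝ) < r from ht0r)
  refine ⟨q, ?_, t0, ?_, hωt0⟩
  · intro s hs
    apply hle
    refine lt_of_le_of_lt ?_ hr2
    rw [ENNReal.coe_le_coe]
    refine le_trans hs ?_
    rw [← Real.toNNReal_coe (r := r)]
    exact Real.toNNReal_mono hq2.le
  · rw [← Real.toNNReal_coe (r := t0)]
    exact Real.toNNReal_mono hq1.le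

end Stmt4Aux

/-- For a Borel probability measure `P` on `Ω = C([0,∞), J)` and `x₀` in the
interior of `J`, the set of levels `b ∈ (x₀, sup J)` such that
`P(τ⁺_b ≠ σ⁺_b) > 0` is at most countable, where `τ⁺_b(ω) = inf {s : ω(s) ≥ b}` and
`σ⁺_b(ω) = inf {s : ω(s) > b}` (values in `[0,∞]`, `inf ∅ = ∞`). -/
theorem stmt4 (J : Set ℝ) (P : Measure {ω : C(ℝ≥0, ℝ) // ∀ t, ω t ∈ J})
    [IsProbabilityMeasure P] (x₀ : ℝ) (hx : x₀ ∈ interior J) :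
    Set.Countable {b : ℝ | x₀ < b ∧ (¬ BddAbove J ∨ b < sSup J) ∧
      0 < P {ω | (⨅ s ∈ {s : ℝ≥0 | b ≤ ω.1 s}, (s : ℝ≥0∞)) ≠
        ⨅ s ∈ {s : ℝ≥0 | b < ω.1 s}, (s : ℝ≥0∞)}} := by
  have key : ∀ q : ℚ, Set.Countable {b : ℝ | 0 < P (Stmt4Aux.M (J := J) q b)} :=
    fun q => Measure.countable_meas_pos_of_disjoint_iUnion
      (fun b => Stmt4Aux.measurableSet_M q b) (Stmt4Aux.disjoint_M q)
  apply Set.Countable.mono ?_ (Set.countable_iUnion key)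
  rintro b ⟨-, -, hP⟩
  have hsub : {ω : {ω : C(ℝ≥0, ℝ) // ∀ t, ω t ∈ J} |
      (⨅ s ∈ {s : ℝ≥0 | b ≤ ω.1 s}, (s : ℝ≥0∞)) ≠
        ⨅ s ∈ {s : ℝ≥0 | b < ω.1 s}, (s : ℝ≥0∞)} ⊆ ⋃ q : ℚ, Stmt4Aux.M (J := J) q b := by
    intro ω hω
    obtain ⟨q, hq⟩ := Stmt4Aux.exists_mem_M hω
    exact Set.mem_iUnion.2 ⟨q, hq⟩
  have : 0 < P (⋃ q : ℚ, Stmt4Aux.M (J := J) q b) := lt_of_lt_of_le hP (measure_mono hsub)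
  rw [pos_iff_ne_zero, Ne, measure_iUnion_null_iff] at this
  push_neg at this
  obtain ⟨q, hq⟩ := this
  exact Set.mem_iUnion.2 ⟨q, Set.mem_setOf_eq ▸ pos_iff_ne_zero.2 hq⟩
end

section
/- Let μ^n, μ^0 be locally finite Borel measures on an open interval J° = (l,r) ⊆ ℝ. Then μ^n → μ^0 vaguely (i.e. ∫ f dμ^n → ∫ f dμ^0 for all continuous f with compact support in J°) if and only if for all a < b with [a,b] ⊂ J° outside a countable exceptional set and all f ∈ C_c(J°), one has ∫ G_{(a,b)}(x,y) f(y) μ^n(dy) → ∫ G_{(a,b)}(x,y) f(y) μ^0(dy) for some fixed x ∈ (a,b), where G_{(a,b)}(x,y) = (x∧y − a)(b − x∨y)/(b−a) is the Green function of (a,b). -/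
open Filter Topology MeasureTheory ENNReal

/-- The Green function of the interval `(a,b)`:
`G_{(a,b)}(x,y) = (x ∧ y − a)(b − x ∨ y)/(b − a)`. -/
noncomputable def greenFn (a b x y : ℝ) : ℝ := (min x y - a) * (b - max x y) / (b - a)

/-- The set integral over `Icc a b` of `greenFn a b x y * f y` equals a plain integral of a
continuous compactly supported function, when `x ∈ Ioo a b`. -/
lemma green_indicator (a b x : ℝ) (hx : x ∈ Set.Ioo a b) (f : ℝ → ℝ) :
    Set.indicator (Set.Icc a b) (fun y => greenFn a b x y * f y)
      = fun y => max (min x y - a) 0 * max (b - max x y) 0 / (b - a) * f y := by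
  funext y
  by_cases hy : y ∈ Set.Icc a b
  · rw [Set.indicator_of_mem hy]
    have h1 : max (min x y - a) 0 = min x y - a :=
      max_eq_left (by simp only [sub_nonneg, le_min_iff]; exact ⟨hx.1.le, hy.1⟩)
    have h2 : max (b - max x y) 0 = b - max x y :=
      max_eq_left (by simp only [sub_nonneg, max_le_iff]; exact ⟨hx.2.le, hy.2⟩)
    rw [h1, h2, greenFn]
  · rw [Set.indicator_of_notMem hy]
    rw [Set.mem_Icc, not_and_or, not_le, not_le] at hy
    rcases hy with h | h
    · have : min x y - a < 0 := by
        rw [min_eq_right (le_of_lt (h.trans hx.1))]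
        linarith
      rw [max_eq_right this.le]; ring
    · have : b - max x y < 0 := by
        rw [max_eq_right (le_of_lt (hx.2.trans h))]
        linarith
      rw [max_eq_right this.le]; ring

/-- For locally finite Borel measures `μ^n, μ^0` on an open interval
`J° ⊆ ℝ`, vague convergence `μ^n → μ^0` is equivalent to convergence of the integrals
`∫ G_{(a,b)}(x,y) f(y) μ^n(dy) → ∫ G_{(a,b)}(x,y) f(y) μ^0(dy)` for some fixed `x ∈ (a,b)`,
for all `a < b` with `[a,b] ⊂ J°` outside a countable exceptional set, and all
`f ∈ C_c(J°)`. -/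
theorem stmt12 (J : Set ℝ) (hJopen : IsOpen J) (hJconn : J.OrdConnected)
    (μ : ℕ → Measure ℝ) (μ0 : Measure ℝ)
    (hloc : ∀ n, ∀ K : Set ℝ, K ⊆ J → IsCompact K → μ n K < ⊤)
    (hloc0 : ∀ K : Set ℝ, K ⊆ J → IsCompact K → μ0 K < ⊤) :
    (∀ f : ℝ → ℝ, Continuous f → HasCompactSupport f → tsupport f ⊆ J →
        Tendsto (fun n => ∫ y, f y ∂(μ n)) atTop (nhds (∫ y, f y ∂μ0))) ↔
      ∃ C : Set (ℝ × ℝ), C.Countable ∧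
        ∀ a b : ℝ, a < b → Set.Icc a b ⊆ J → (a, b) ∉ C →
          ∃ x ∈ Set.Ioo a b, ∀ f : ℝ → ℝ, Continuous f → HasCompactSupport f →
            tsupport f ⊆ J →
            Tendsto (fun n => ∫ y in Set.Icc a b, greenFn a b x y * f y ∂(μ n)) atTop
              (nhds (∫ y in Set.Icc a b, greenFn a b x y * f y ∂μ0)) := by
  constructor
  · -- forward direction
    intro hvague
    refine ⟨∅, Set.countable_empty, fun a b hab hIcc _ => ?_⟩
    have hx : (a + b) / 2 ∈ Set.Ioo a b := ⟨by linarith, by linarith⟩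
    refine ⟨(a + b) / 2, hx, fun f hf hfc hfs => ?_⟩
    set x := (a + b) / 2
    set g : ℝ → ℝ := fun y => max (min x y - a) 0 * max (b - max x y) 0 / (b - a) * f y
      with hg
    have key : ∀ ν : Measure ℝ,
        (∫ y in Set.Icc a b, greenFn a b x y * f y ∂ν) = ∫ y, g y ∂ν := by
      intro ν
      rw [← integral_indicator measurableSet_Icc, green_indicator a b x hx f]
    simp only [key]
    apply hvague g
    · apply Continuous.mul _ hf
      apply Continuous.div_const
      exact ((continuous_const.min continuous_id').sub continuous_const).max continuous_const
        |>.mul (((continuous_const.sub (continuous_const.max continuous_id')).max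
          continuous_const))
    · exact hfc.mul_left
    · exact subset_trans tsupport_mul_subset_right hfs
  · -- converse direction
    intro hgreen f hf hfc hfs
    by_cases hfz : ∀ y, f y = 0
    · have : f = fun _ => 0 := funext hfz
      simp [this]
    -- tsupport f is nonempty and compact
    have hKne : (tsupport f).Nonempty := by
      push_neg at hfz
      obtain ⟨y, hy⟩ := hfz
      exact ⟨y, subset_tsupport f hy⟩
    set K := tsupport f with hK
    have hKcomp : IsCompact K := hfc
    set m := sInf K with hm
    set M := sSup K with hM
    have hmK : m ∈ K := hKcomp.sInf_mem hKne
    have hMK : M ∈ K := hKcomp.sSup_mem hKne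
    have hKsub : K ⊆ Set.Icc m M := subset_Icc_csInf_csSup hKcomp.bddBelow hKcomp.bddAbove
    have hmM : m ≤ M := (hKsub hmK).2
    -- find δ-neighborhoods inside J
    obtain ⟨δ1, hδ1, hball1⟩ := Metric.isOpen_iff.mp hJopen m (hfs hmK)
    obtain ⟨δ2, hδ2, hball2⟩ := Metric.isOpen_iff.mp hJopen M (hfs hMK)
    -- choose b
    set b := M + δ2 / 2 with hb
    have hbJ : b ∈ J := hball2 (by simp [hb, Real.dist_eq, abs_of_nonneg, hδ2.le]; linarith)
    have hMb : M < b := by simp [hb]; linarith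
    -- choose a avoiding the countable set
    obtain ⟨C, hCcount, hC⟩ := hgreen
    have hbad : {a : ℝ | (a, b) ∈ C}.Countable := by
      have : {a : ℝ | (a, b) ∈ C} ⊆ Prod.fst '' C := fun a ha => ⟨(a, b), ha, rfl⟩
      exact (hCcount.image Prod.fst).mono this
    have hA : ¬ (Set.Ioo (m - δ1 / 2) m ⊆ {a : ℝ | (a, b) ∈ C}) := by
      intro hsub
      have h0 : volume (Set.Ioo (m - δ1 / 2) m) = 0 :=
        measure_mono_null hsub (hbad.measure_zero volume)
      rw [Real.volume_Ioo] at h0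
      have : (0:ℝ) < m - (m - δ1 / 2) := by linarith
      simp [ENNReal.ofReal_eq_zero, not_le.mpr this] at h0
      linarith
    obtain ⟨a, haIoo, haC⟩ := Set.not_subset.mp hA
    have haJ : a ∈ J := hball1 (by
      simp only [Metric.mem_ball, Real.dist_eq, abs_lt]
      constructor <;> [linarith [haIoo.1]; linarith [haIoo.2]])
    have ham : a < m := haIoo.2
    have hab : a < b := lt_of_lt_of_le ham (le_trans hmM hMb.le)
    have hIcc : Set.Icc a b ⊆ J := hJconn.out haJ hbJ
    obtain ⟨x, hx, hxP⟩ := hC a b hab hIcc haC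
    -- the clamped reciprocal of the Green function
    set c : ℝ → ℝ := fun y => max m (min y M) with hc
    have hc_cont : Continuous c := continuous_const.max (continuous_id'.min continuous_const)
    have hc_mem : ∀ y, c y ∈ Set.Icc m M := fun y =>
      ⟨le_max_left _ _, max_le (hmM) (min_le_right _ _)⟩
    have hGpos : ∀ t ∈ Set.Icc m M, 0 < greenFn a b x t := by
      intro t ht
      have h1 : a < min x t := lt_min hx.1 (lt_of_lt_of_le ham ht.1)
      have h2 : max x t < b := max_lt hx.2 (lt_of_le_of_lt ht.2 hMb)
      have : (0:ℝ) < b - a := by linarith [hx.1, hx.2]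
      exact div_pos (mul_pos (by linarith) (by linarith)) this
    have hGy_cont : Continuous (fun t => greenFn a b x t) := by
      unfold greenFn
      exact (((continuous_const.min continuous_id').sub continuous_const).mul
        (continuous_const.sub (continuous_const.max continuous_id'))).div_const _
    set h : ℝ → ℝ := fun y => f y * (greenFn a b x (c y))⁻¹ with hh
    have hh_cont : Continuous h :=
      hf.mul ((hGy_cont.comp hc_cont).inv₀ fun y => (hGpos _ (hc_mem y)).ne')
    have hh_supp : HasCompactSupport h := hfc.mul_right
    have hh_ts : tsupport h ⊆ J := subset_trans tsupport_mul_subset_left hfs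
    -- the key pointwise identity
    have hkey : ∀ y, greenFn a b x y * h y = f y := by
      intro y
      by_cases hy : f y = 0
      · simp [hh, hy]
      · have hyK : y ∈ K := subset_tsupport f hy
        have hyIcc : y ∈ Set.Icc m M := hKsub hyK
        have hcy : c y = y := by
          simp only [hc]
          rw [min_eq_left hyIcc.2, max_eq_right hyIcc.1]
        have hGne : greenFn a b x y ≠ 0 := by
          have := hGpos y hyIcc
          exact this.ne'
        simp only [hh, hcy]
        field_simp
    have hfs_Icc : Function.support f ⊆ Set.Icc a b := fun y hy =>
      Set.Icc_subset_Icc ham.le hMb.le (hKsub (subset_tsupport f hy))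
    have hint : ∀ ν : Measure ℝ,
        (∫ y in Set.Icc a b, greenFn a b x y * h y ∂ν) = ∫ y, f y ∂ν := by
      intro ν
      have h1 : (∫ y in Set.Icc a b, greenFn a b x y * h y ∂ν)
          = ∫ y in Set.Icc a b, f y ∂ν := by
        congr 1
        exact funext hkey
      rw [h1, ← integral_indicator measurableSet_Icc,
        Set.indicator_eq_self.mpr hfs_Icc]
    have := hxP h hh_cont hh_supp hh_ts
    simpa only [hint] using this
end
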